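/- Let 𝒳_j and 𝒴_j, j ∈ ℕ, be two independent sequences of σ-fields, each φ-mixing with coefficients φ_𝒳(k) and φ_𝒴(k). Define 𝒵_j = σ-field generated jointly by 𝒳_j and 𝒴_j (product σ-field). Then the φ-mixing coefficients of (𝒵_j) satisfy φ_𝒵(k) ≤ φ_𝒳(k) + φ_𝒴(k) − φ_𝒳(k)φ_𝒴(k), and consequently Σ_k √(φ_𝒵(k)) ≤ Σ_k √(φ_𝒳(k)) + Σ_k √(φ_𝒴(k)). -/
import Mathlib


open MeasureTheory ProbabilityTheory

/-- The `φ`-dependence coefficient between two sub-σ-fields: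
`φ(𝒜,ℬ) = sup{|P(A) − P(A∩B)/P(B)| : A ∈ 𝒜, B ∈ ℬ, P(B) ≠ 0}`. -/
noncomputable def phiCoef {Ω : Type*} [MeasurableSpace Ω] (μ : Measure Ω)
    (mA mB : MeasurableSpace Ω) : ℝ :=
  sSup {r : ℝ | ∃ A B : Set Ω, MeasurableSet[mA] A ∧ MeasurableSet[mB] B ∧ μ B ≠ 0 ∧
    r = |(μ A).toReal - (μ (A ∩ B)).toReal / (μ B).toReal|}

/-- The `φ`-mixing coefficients of a sequence of σ-fields:
`φ_𝒜(k) = sup_{|j−s|≥k} φ(𝒜_j, 𝒜_s)`. -/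
noncomputable def phiMix {Ω : Type*} [MeasurableSpace Ω] (μ : Measure Ω)
    (mseq : ℕ → MeasurableSpace Ω) (k : ℕ) : ℝ :=
  sSup {r : ℝ | ∃ j s : ℕ, (k : ℤ) ≤ |(j : ℤ) - s| ∧ r = phiCoef μ (mseq j) (mseq s)}

section TV
open Finset

lemma abs_sum_le_half {γ : Type*} [Fintype γ] (d : γ → ℝ) (h0 : ∑ x, d x = 0)
    (S : Finset γ) : |∑ x ∈ S, d x| ≤ (∑ x, |d x|) / 2 := by
  classical
  have key : ∀ T : Finset γ, ∑ x ∈ T, d x ≤ (∑ x, |d x|) / 2 := by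
    intro T
    have h1 : ∑ x ∈ T, d x ≤ ∑ x, max (d x) 0 :=
      calc ∑ x ∈ T, d x ≤ ∑ x ∈ T, max (d x) 0 := sum_le_sum fun i _ => le_max_left _ _
        _ ≤ ∑ x, max (d x) 0 := sum_le_sum_of_subset_of_nonneg (subset_univ T)
            (fun i _ _ => le_max_right _ _)
    have h2 : ∑ x, max (d x) 0 = (∑ x, |d x|) / 2 := by
      have e : ∀ x : γ, max (d x) 0 = (|d x| + d x) / 2 := fun x => by
        rcases le_or_gt 0 (d x) with h | h
        · rw [max_eq_left h, abs_of_nonneg h]; ring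
        · rw [max_eq_right h.le, abs_of_neg h]; ring
      rw [Finset.sum_congr rfl fun x _ => e x, ← Finset.sum_div, Finset.sum_add_distrib, h0,
        add_zero]
    linarith
  rw [abs_le]
  refine ⟨?_, key S⟩
  have h3 := key Sᶜ
  have hsplit : ∑ x ∈ S, d x + ∑ x ∈ Sᶜ, d x = 0 := by
    rw [Finset.sum_add_sum_compl]; exact h0
  linarith

lemma abs_nonneg_orth {u v : ℝ} (hu : 0 ≤ u) (hv : 0 ≤ v) (huv : u * v = 0) :
    |u - v| = u + v := by
  rcases mul_eq_zero.1 huv with h | h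
  · subst h; rw [abs_of_nonpos (by linarith)]; ring
  · subst h; rw [abs_of_nonneg (by linarith)]; ring

lemma tv_prod {ι κ : Type*} [Fintype ι] [Fintype κ] (p p' : ι → ℝ) (q q' : κ → ℝ)
    (hp : ∀ i, 0 ≤ p i) (hp' : ∀ i, 0 ≤ p' i) (hq : ∀ j, 0 ≤ q j) (hq' : ∀ j, 0 ≤ q' j)
    (hps : ∑ i, p i = 1) (hp's : ∑ i, p' i = 1) (hqs : ∑ j, q j = 1) (hq's : ∑ j, q' j = 1)
    {a b : ℝ} (ha1 : a ≤ 1) (hb1 : b ≤ 1)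
    (hA : ∀ T : Finset ι, |∑ i ∈ T, (p i - p' i)| ≤ a)
    (hB : ∀ T : Finset κ, |∑ j ∈ T, (q j - q' j)| ≤ b)
    (S : Finset (ι × κ)) :
    |∑ x ∈ S, (p x.1 * q x.2 - p' x.1 * q' x.2)| ≤ a + b - a * b := by
  classical
  set r : ι → ℝ := fun i => max (p i - p' i) 0 with hrdef
  set s : κ → ℝ := fun j => max (q j - q' j) 0 with hsdef
  set r' : ι → ℝ := fun i => max (p' i - p i) 0 with hr'def
  set s' : κ → ℝ := fun j => max (q' j - q j) 0 with hs'def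
  have hr0 : ∀ i, 0 ≤ r i := fun i => le_max_right _ _
  have hr'0 : ∀ i, 0 ≤ r' i := fun i => le_max_right _ _
  have hs0 : ∀ j, 0 ≤ s j := fun j => le_max_right _ _
  have hs'0 : ∀ j, 0 ≤ s' j := fun j => le_max_right _ _
  have hrsub : ∀ i, r i - r' i = p i - p' i := by
    intro i; rcases le_total (p i) (p' i) with h | h
    · simp only [hrdef, hr'def]; rw [max_eq_right (by linarith : p i - p' i ≤ 0), max_eq_left (by linarith : (0:ℝ) ≤ p' i - p i)]; ring
    · simp only [hrdef, hr'def]; rw [max_eq_left (by linarith : (0:ℝ) ≤ p i - p' i), max_eq_right (by linarith : p' i - p i ≤ 0)]; ring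
  have hssub : ∀ j, s j - s' j = q j - q' j := by
    intro j; rcases le_total (q j) (q' j) with h | h
    · simp only [hsdef, hs'def]; rw [max_eq_right (by linarith : q j - q' j ≤ 0), max_eq_left (by linarith : (0:ℝ) ≤ q' j - q j)]; ring
    · simp only [hsdef, hs'def]; rw [max_eq_left (by linarith : (0:ℝ) ≤ q j - q' j), max_eq_right (by linarith : q' j - q j ≤ 0)]; ring
  have hrr' : ∀ i, r i * r' i = 0 := by
    intro i; rcases le_total (p i) (p' i) with h | h
    · simp only [hrdef]; rw [max_eq_right (by linarith : p i - p' i ≤ 0)]; ring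
    · simp only [hr'def]; rw [max_eq_right (by linarith : p' i - p i ≤ 0)]; ring
  have hss' : ∀ j, s j * s' j = 0 := by
    intro j; rcases le_total (q j) (q' j) with h | h
    · simp only [hsdef]; rw [max_eq_right (by linarith : q j - q' j ≤ 0)]; ring
    · simp only [hs'def]; rw [max_eq_right (by linarith : q' j - q j ≤ 0)]; ring
  have hrlep : ∀ i, r i ≤ p i := fun i => by
    simp only [hrdef]; rcases le_total (p i - p' i) 0 with h | h
    · rw [max_eq_right h]; exact hp i
    · rw [max_eq_left h]; linarith [hp' i]
  have hsleq : ∀ j, s j ≤ q j := fun j => by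
    simp only [hsdef]; rcases le_total (q j - q' j) 0 with h | h
    · rw [max_eq_right h]; exact hq j
    · rw [max_eq_left h]; linarith [hq' j]
  have hr'lep' : ∀ i, r' i ≤ p' i := fun i => by
    simp only [hr'def]; rcases le_total (p' i - p i) 0 with h | h
    · rw [max_eq_right h]; exact hp' i
    · rw [max_eq_left h]; linarith [hp i]
  have hs'leq' : ∀ j, s' j ≤ q' j := fun j => by
    simp only [hs'def]; rcases le_total (q' j - q j) 0 with h | h
    · rw [max_eq_right h]; exact hq' j
    · rw [max_eq_left h]; linarith [hq j]
  set a₂ : ℝ := ∑ i, r i with ha₂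
  set b₂ : ℝ := ∑ j, s j with hb₂
  have hr'sum : ∑ i, r' i = a₂ := by
    have : ∀ i ∈ Finset.univ, r' i = r i - (p i - p' i) := fun i _ => by
      have := hrsub i; linarith
    rw [Finset.sum_congr rfl this, Finset.sum_sub_distrib, Finset.sum_sub_distrib, hps, hp's, ha₂]
    ring
  have hs'sum : ∑ j, s' j = b₂ := by
    have : ∀ j ∈ Finset.univ, s' j = s j - (q j - q' j) := fun j _ => by
      have := hssub j; linarith
    rw [Finset.sum_congr rfl this, Finset.sum_sub_distrib, Finset.sum_sub_distrib, hqs, hq's, hb₂]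
    ring
  have ha₂0 : 0 ≤ a₂ := Finset.sum_nonneg fun i _ => hr0 i
  have hb₂0 : 0 ≤ b₂ := Finset.sum_nonneg fun j _ => hs0 j
  have ha₂1 : a₂ ≤ 1 := by
    rw [ha₂, ← hps]; exact Finset.sum_le_sum fun i _ => hrlep i
  have hb₂1 : b₂ ≤ 1 := by
    rw [hb₂, ← hqs]; exact Finset.sum_le_sum fun j _ => hsleq j
  have ha₂a : a₂ ≤ a := by
    have hT := hA (Finset.univ.filter fun i => 0 < p i - p' i)
    have heq : ∑ i ∈ Finset.univ.filter (fun i => 0 < p i - p' i), (p i - p' i) = a₂ := by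
      rw [ha₂, ← Finset.sum_filter_add_sum_filter_not Finset.univ (fun i => 0 < p i - p' i) r]
      have e1 : ∀ i ∈ Finset.univ.filter (fun i => 0 < p i - p' i), r i = p i - p' i :=
        fun i hi => by
          simp only [Finset.mem_filter] at hi
          simp only [hrdef]; exact max_eq_left hi.2.le
      have e2 : ∀ i ∈ Finset.univ.filter (fun i => ¬ 0 < p i - p' i), r i = 0 :=
        fun i hi => by
          simp only [Finset.mem_filter, not_lt] at hi
          simp only [hrdef]; exact max_eq_right hi.2
      rw [Finset.sum_congr rfl e1, Finset.sum_congr rfl e2, Finset.sum_const_zero, add_zero]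
    rw [heq] at hT
    exact le_trans (le_abs_self _) (heq ▸ hA _)
  have hb₂b : b₂ ≤ b := by
    have heq : ∑ j ∈ Finset.univ.filter (fun j => 0 < q j - q' j), (q j - q' j) = b₂ := by
      rw [hb₂, ← Finset.sum_filter_add_sum_filter_not Finset.univ (fun j => 0 < q j - q' j) s]
      have e1 : ∀ j ∈ Finset.univ.filter (fun j => 0 < q j - q' j), s j = q j - q' j :=
        fun j hj => by
          simp only [Finset.mem_filter] at hj
          simp only [hsdef]; exact max_eq_left hj.2.le
      have e2 : ∀ j ∈ Finset.univ.filter (fun j => ¬ 0 < q j - q' j), s j = 0 :=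
        fun j hj => by
          simp only [Finset.mem_filter, not_lt] at hj
          simp only [hsdef]; exact max_eq_right hj.2
      rw [Finset.sum_congr rfl e1, Finset.sum_congr rfl e2, Finset.sum_const_zero, add_zero]
    exact le_trans (le_abs_self _) (heq ▸ hB _)
  -- total sum of d is zero
  set d : ι × κ → ℝ := fun x => p x.1 * q x.2 - p' x.1 * q' x.2 with hddef
  have hd0 : ∑ x : ι × κ, d x = 0 := by
    rw [hddef, Fintype.sum_prod_type]
    simp_rw [Finset.sum_sub_distrib, ← Finset.mul_sum, hqs, hq's, mul_one, hps, hp's]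
    norm_num
  -- pointwise bound on |d|
  have hptwise : ∀ x : ι × κ, |d x| ≤
      (p x.1 - r x.1) * (s x.2 + s' x.2) + (q x.2 - s x.2) * (r x.1 + r' x.1)
        + (r x.1 * s x.2 + r' x.1 * s' x.2) := by
    rintro ⟨i, j⟩
    have hr'e : r' i = r i - p i + p' i := by have := hrsub i; linarith
    have hs'e : s' j = s j - q j + q' j := by have := hssub j; linarith
    have hid : d (i, j) = (p i - r i) * (s j - s' j) + (q j - s j) * (r i - r' i)
        + (r i * s j - r' i * s' j) := by
      show p i * q j - p' i * q' j = _
      rw [hr'e, hs'e]; ring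
    have hα0 : 0 ≤ p i - r i := by linarith [hrlep i]
    have hβ0 : 0 ≤ q j - s j := by linarith [hsleq j]
    rw [show ((i, j) : ι × κ).1 = i from rfl, show ((i, j) : ι × κ).2 = j from rfl]
    rw [abs_le]
    constructor
    · rw [hid]
      nlinarith [mul_nonneg hα0 (hs0 j), mul_nonneg hβ0 (hr0 i), mul_nonneg (hr0 i) (hs0 j),
        mul_nonneg hα0 (hs'0 j), mul_nonneg hβ0 (hr'0 i), mul_nonneg (hr'0 i) (hs'0 j)]
    · rw [hid]
      nlinarith [mul_nonneg hα0 (hs0 j), mul_nonneg hβ0 (hr0 i), mul_nonneg (hr0 i) (hs0 j),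
        mul_nonneg hα0 (hs'0 j), mul_nonneg hβ0 (hr'0 i), mul_nonneg (hr'0 i) (hs'0 j)]
  -- sum of |d|
  have sum_eq : ∑ x : ι × κ, ((p x.1 - r x.1) * (s x.2 + s' x.2)
      + (q x.2 - s x.2) * (r x.1 + r' x.1) + (r x.1 * s x.2 + r' x.1 * s' x.2))
      = (1 - a₂) * (b₂ + b₂) + (1 - b₂) * (a₂ + a₂) + (a₂ * b₂ + a₂ * b₂) := by
    rw [Fintype.sum_prod_type]
    simp only [Finset.sum_add_distrib, Finset.sum_sub_distrib, ← Finset.mul_sum,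
      ← Finset.sum_mul]
    rw [hps, hqs, hr'sum, hs'sum, ← ha₂, ← hb₂]
  have hsumabs : ∑ x : ι × κ, |d x| ≤ 2 * (a₂ + b₂ - a₂ * b₂) := by
    refine le_trans (Finset.sum_le_sum fun x _ => hptwise x) ?_
    rw [sum_eq]; ring_nf; nlinarith [ha₂0, hb₂0]
  have habs := abs_sum_le_half d hd0 S
  have hfinal : a₂ + b₂ - a₂ * b₂ ≤ a + b - a * b := by nlinarith
  calc |∑ x ∈ S, d x| ≤ (∑ x, |d x|) / 2 := habs
    _ ≤ (2 * (a₂ + b₂ - a₂ * b₂)) / 2 := by linarith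
    _ = a₂ + b₂ - a₂ * b₂ := by ring
    _ ≤ a + b - a * b := hfinal

end TV

section Grid
open MeasureTheory Set

variable {Ω : Type*}

def rects (mA mB : MeasurableSpace Ω) : Set (Set Ω) :=
  {u | ∃ E F : Set Ω, MeasurableSet[mA] E ∧ MeasurableSet[mB] F ∧ u = E ∩ F}

structure GridRep (mA mB : MeasurableSpace Ω) (t : Set Ω) : Prop where
  (ok : ∃ (ι κ : Type) (_ : Fintype ι) (_ : Fintype κ) (E : ι → Set Ω) (F : κ → Set Ω)
      (S : Finset (ι × κ)),
      (∀ i, MeasurableSet[mA] (E i)) ∧ (∀ j, MeasurableSet[mB] (F j)) ∧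
      (Pairwise fun i i' => Disjoint (E i) (E i')) ∧
      (Pairwise fun j j' => Disjoint (F j) (F j')) ∧
      (⋃ i, E i) = Set.univ ∧ (⋃ j, F j) = Set.univ ∧
      t = ⋃ x ∈ S, E x.1 ∩ F x.2)

lemma exists_grid {mA mB : MeasurableSpace Ω} {t : Set Ω}
    (ht : t ∈ generateSetAlgebra (rects mA mB)) : GridRep mA mB t := by
  classical
  induction ht with
  | base u hu =>
    obtain ⟨E, F, hE, hF, rfl⟩ := hu
    refine ⟨Bool, Bool, inferInstance, inferInstance,
      (fun i => if i then E else Eᶜ), (fun j => if j then F else Fᶜ),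
      {(true, true)}, ?_, ?_, ?_, ?_, ?_, ?_, ?_⟩
    · intro i; cases i <;> simp [hE, hE.compl]
    · intro j; cases j <;> simp [hF, hF.compl]
    · intro i i' hii'
      cases i <;> cases i' <;> simp_all <;>
        [exact disjoint_compl_left; exact disjoint_compl_right]
    · intro j j' hjj'
      cases j <;> cases j' <;> simp_all <;>
        [exact disjoint_compl_left; exact disjoint_compl_right]
    · ext ω; simp [Bool.exists_bool]; tauto
    · ext ω; simp [Bool.exists_bool]; tauto
    · simp
  | empty =>
    refine ⟨PUnit, PUnit, inferInstance, inferInstance, (fun _ => Set.univ), (fun _ => Set.univ),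
      ∅, fun _ => MeasurableSet.univ, fun _ => MeasurableSet.univ,
      Subsingleton.pairwise, Subsingleton.pairwise, by simp [Set.iUnion_const], by simp [Set.iUnion_const], by simp⟩
  | compl u hu ih =>
    obtain ⟨ι, κ, hι, hκ, E, F, S, hE, hF, hdE, hdF, hcE, hcF, hrep⟩ := ih.ok
    letI := hι; letI := hκ
    have hcelldisj : ∀ x y : ι × κ, x ≠ y → Disjoint (E x.1 ∩ F x.2) (E y.1 ∩ F y.2) := by
      intro x y hxy
      rcases eq_or_ne x.1 y.1 with h1 | h1
      · have h2 : x.2 ≠ y.2 := fun h2 => hxy (Prod.ext h1 h2)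
        exact Disjoint.mono inter_subset_right inter_subset_right (hdF h2)
      · exact Disjoint.mono inter_subset_left inter_subset_left (hdE h1)
    refine ⟨ι, κ, hι, hκ, E, F, Finset.univ \ S, hE, hF, hdE, hdF, hcE, hcF, ?_⟩
    ext ω
    -- find the unique cell of ω
    have hωE : ∃ i, ω ∈ E i := by
      have : ω ∈ ⋃ i, E i := hcE ▸ mem_univ ω
      simpa using this
    have hωF : ∃ j, ω ∈ F j := by
      have : ω ∈ ⋃ j, F j := hcF ▸ mem_univ ω
      simpa using this
    obtain ⟨i₀, hi₀⟩ := hωE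
    obtain ⟨j₀, hj₀⟩ := hωF
    have hmem : ∀ x : ι × κ, ω ∈ E x.1 ∩ F x.2 ↔ x = (i₀, j₀) := by
      intro x
      constructor
      · intro hx
        by_contra hne
        exact (hcelldisj x (i₀, j₀) hne).ne_of_mem hx ⟨hi₀, hj₀⟩ rfl
      · rintro rfl; exact ⟨hi₀, hj₀⟩
    constructor
    · intro hω
      have hnot : (i₀, j₀) ∉ S := by
        intro hS
        exact hω (hrep ▸ Set.mem_biUnion hS ⟨hi₀, hj₀⟩)
      exact Set.mem_biUnion (show (i₀, j₀) ∈ Finset.univ \ S by simp [hnot]) ⟨hi₀, hj₀⟩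
    · intro hω hωu
      simp only [Set.mem_iUnion] at hω
      obtain ⟨x, hxS, hx⟩ := hω
      rw [hmem x] at hx
      subst hx
      simp only [Finset.mem_sdiff, Finset.mem_univ, true_and] at hxS
      rw [hrep] at hωu
      simp only [Set.mem_iUnion] at hωu
      obtain ⟨y, hyS, hy⟩ := hωu
      rw [hmem y] at hy
      subst hy
      exact hxS hyS
  | union u v hu hv ihu ihv =>
    obtain ⟨ι₁, κ₁, hι₁, hκ₁, E₁, F₁, S₁, hE₁, hF₁, hdE₁, hdF₁, hcE₁, hcF₁, hrep₁⟩ := ihu.ok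
    obtain ⟨ι₂, κ₂, hι₂, hκ₂, E₂, F₂, S₂, hE₂, hF₂, hdE₂, hdF₂, hcE₂, hcF₂, hrep₂⟩ := ihv.ok
    letI := hι₁; letI := hκ₁; letI := hι₂; letI := hκ₂
    refine ⟨ι₁ × ι₂, κ₁ × κ₂, inferInstance, inferInstance,
      (fun i => E₁ i.1 ∩ E₂ i.2), (fun j => F₁ j.1 ∩ F₂ j.2),
      Finset.univ.filter fun x => (x.1.1, x.2.1) ∈ S₁ ∨ (x.1.2, x.2.2) ∈ S₂,
      fun i => (hE₁ i.1).inter (hE₂ i.2), fun j => (hF₁ j.1).inter (hF₂ j.2),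
      ?_, ?_, ?_, ?_, ?_⟩
    · intro i i' hii'
      rcases eq_or_ne i.1 i'.1 with h1 | h1
      · have h2 : i.2 ≠ i'.2 := fun h2 => hii' (Prod.ext h1 h2)
        exact Disjoint.mono inter_subset_right inter_subset_right (hdE₂ h2)
      · exact Disjoint.mono inter_subset_left inter_subset_left (hdE₁ h1)
    · intro j j' hjj'
      rcases eq_or_ne j.1 j'.1 with h1 | h1
      · have h2 : j.2 ≠ j'.2 := fun h2 => hjj' (Prod.ext h1 h2)
        exact Disjoint.mono inter_subset_right inter_subset_right (hdF₂ h2)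
      · exact Disjoint.mono inter_subset_left inter_subset_left (hdF₁ h1)
    · ext ω
      simp only [Set.mem_iUnion, Prod.exists, Set.mem_inter_iff, Set.mem_univ, iff_true]
      have h1 : ω ∈ ⋃ i, E₁ i := hcE₁ ▸ mem_univ ω
      have h2 : ω ∈ ⋃ i, E₂ i := hcE₂ ▸ mem_univ ω
      simp only [Set.mem_iUnion] at h1 h2
      obtain ⟨i1, h1⟩ := h1; obtain ⟨i2, h2⟩ := h2
      exact ⟨i1, i2, h1, h2⟩
    · ext ω
      simp only [Set.mem_iUnion, Prod.exists, Set.mem_inter_iff, Set.mem_univ, iff_true]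
      have h1 : ω ∈ ⋃ j, F₁ j := hcF₁ ▸ mem_univ ω
      have h2 : ω ∈ ⋃ j, F₂ j := hcF₂ ▸ mem_univ ω
      simp only [Set.mem_iUnion] at h1 h2
      obtain ⟨j1, h1⟩ := h1; obtain ⟨j2, h2⟩ := h2
      exact ⟨j1, j2, h1, h2⟩
    · ext ω
      simp only [Set.mem_union, Set.mem_iUnion, Finset.mem_filter, Finset.mem_univ, true_and,
        Set.mem_inter_iff]
      constructor
      · rintro (hω | hω)
        · rw [hrep₁] at hω
          simp only [Set.mem_iUnion] at hω
          obtain ⟨x, hxS, hx1, hx2⟩ := hω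
          have h2 : ω ∈ ⋃ i, E₂ i := hcE₂ ▸ mem_univ ω
          have h3 : ω ∈ ⋃ j, F₂ j := hcF₂ ▸ mem_univ ω
          simp only [Set.mem_iUnion] at h2 h3
          obtain ⟨i2, h2⟩ := h2; obtain ⟨j2, h3⟩ := h3
          exact ⟨((x.1, i2), (x.2, j2)), Or.inl hxS, ⟨hx1, h2⟩, hx2, h3⟩
        · rw [hrep₂] at hω
          simp only [Set.mem_iUnion] at hω
          obtain ⟨x, hxS, hx1, hx2⟩ := hω
          have h2 : ω ∈ ⋃ i, E₁ i := hcE₁ ▸ mem_univ ω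
          have h3 : ω ∈ ⋃ j, F₁ j := hcF₁ ▸ mem_univ ω
          simp only [Set.mem_iUnion] at h2 h3
          obtain ⟨i1, h2⟩ := h2; obtain ⟨j1, h3⟩ := h3
          exact ⟨((i1, x.1), (j1, x.2)), Or.inr hxS, ⟨h2, hx1⟩, h3, hx2⟩
      · rintro ⟨x, (hS | hS), ⟨he1, he2⟩, hf1, hf2⟩
        · left
          rw [hrep₁]
          exact Set.mem_biUnion hS ⟨he1, hf1⟩
        · right
          rw [hrep₂]
          exact Set.mem_biUnion hS ⟨he2, hf2⟩

end Grid

section Approx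
open MeasureTheory ProbabilityTheory Set symmDiff
lemma join_eq_generateFrom_rects (mA mB : MeasurableSpace Ω) :
    mA ⊔ mB = MeasurableSpace.generateFrom (rects mA mB) := by
  apply le_antisymm
  · apply sup_le
    · intro E hE
      have : E = E ∩ univ := by simp
      rw [this]
      exact MeasurableSpace.measurableSet_generateFrom ⟨E, univ, hE, MeasurableSet.univ, rfl⟩
    · intro F hF
      have : F = univ ∩ F := by simp
      rw [this]
      exact MeasurableSpace.measurableSet_generateFrom ⟨univ, F, MeasurableSet.univ, hF, rfl⟩
  · rw [MeasurableSpace.generateFrom_le_iff]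
    rintro u ⟨E, F, hE, hF, rfl⟩
    exact MeasurableSet.inter ((le_sup_left : mA ≤ mA ⊔ mB) E hE)
      ((le_sup_right : mB ≤ mA ⊔ mB) F hF)

lemma approx_join {mA mB : MeasurableSpace Ω} [mΩ : MeasurableSpace Ω] (μ : Measure Ω)
    [IsProbabilityMeasure μ] (hle : mA ⊔ mB ≤ mΩ) {A : Set Ω}
    (hA : MeasurableSet[mA ⊔ mB] A) {ε : ℝ} (hε : 0 < ε) :
    ∃ t, t ∈ generateSetAlgebra (rects mA mB) ∧ MeasurableSet[mA ⊔ mB] t ∧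
      (μ (A ∆ t)).toReal ≤ ε := by
  set ν : @Measure Ω (mA ⊔ mB) := μ.trim hle with hν
  have hfin : IsFiniteMeasure ν := by
    constructor
    rw [hν, trim_measurableSet_eq hle (@MeasurableSet.univ Ω (mA ⊔ mB))]
    simp
  have hgen : (mA ⊔ mB) = MeasurableSpace.generateFrom (generateSetAlgebra (rects mA mB)) := by
    rw [generateFrom_generateSetAlgebra_eq]
    exact join_eq_generateFrom_rects mA mB
  have dense := @Measure.MeasureDense.of_generateFrom_isSetAlgebra_finite Ω (mA ⊔ mB) ν
    (generateSetAlgebra (rects mA mB)) hfin isSetAlgebra_generateSetAlgebra hgen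
  have hνA : ν A ≠ ⊤ := by
    rw [hν, trim_measurableSet_eq hle hA]; exact measure_ne_top μ A
  obtain ⟨t, htmem, htapp⟩ :=
    @Measure.MeasureDense.approx Ω (mA ⊔ mB) ν (generateSetAlgebra (rects mA mB)) dense
      A hA hνA ε hε
  have htmeas : MeasurableSet[mA ⊔ mB] t := by
    rw [hgen]
    exact MeasurableSpace.measurableSet_generateFrom htmem
  refine ⟨t, htmem, htmeas, ?_⟩
  have hsd : MeasurableSet[mA ⊔ mB] (A ∆ t) := hA.symmDiff htmeas
  rw [hν, trim_measurableSet_eq hle hsd] at htapp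
  calc (μ (A ∆ t)).toReal ≤ (ENNReal.ofReal ε).toReal :=
        ENNReal.toReal_mono ENNReal.ofReal_ne_top htapp.le
    _ = ε := ENNReal.toReal_ofReal hε.le

section prhelpers
variable [mΩ : MeasurableSpace Ω] {μ : Measure Ω} [IsProbabilityMeasure μ]

lemma pr_mono {A B : Set Ω} (h : A ⊆ B) : (μ A).toReal ≤ (μ B).toReal :=
  ENNReal.toReal_mono (measure_ne_top _ _) (measure_mono h)

lemma pr_union_le (A B : Set Ω) : (μ (A ∪ B)).toReal ≤ (μ A).toReal + (μ B).toReal := by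
  rw [← ENNReal.toReal_add (measure_ne_top _ _) (measure_ne_top _ _)]
  exact ENNReal.toReal_mono (by simp [ENNReal.add_ne_top, measure_ne_top]) (measure_union_le A B)

lemma abs_pr_sub_le (A A' : Set Ω) :
    |(μ A).toReal - (μ A').toReal| ≤ (μ (A ∆ A')).toReal := by
  have h1 : A ⊆ A' ∪ A ∆ A' := by
    intro x hx
    by_cases hx' : x ∈ A'
    · exact Or.inl hx'
    · exact Or.inr (by simp [Set.mem_symmDiff]; tauto)
  have h2 : A' ⊆ A ∪ A ∆ A' := by
    intro x hx
    by_cases hx' : x ∈ A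
    · exact Or.inl hx'
    · exact Or.inr (by simp [Set.mem_symmDiff]; tauto)
  have b1 : (μ A).toReal ≤ (μ A').toReal + (μ (A ∆ A')).toReal :=
    le_trans (pr_mono h1) (pr_union_le _ _)
  have b2 : (μ A').toReal ≤ (μ A).toReal + (μ (A ∆ A')).toReal :=
    le_trans (pr_mono h2) (pr_union_le _ _)
  rw [abs_sub_le_iff]
  constructor <;> linarith

lemma symmDiff_inter_subset (A B A' B' : Set Ω) :
    (A ∩ B) ∆ (A' ∩ B') ⊆ (A ∆ A') ∪ (B ∆ B') := by
  intro x hx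
  simp only [Set.mem_symmDiff, Set.mem_union, Set.mem_inter_iff] at hx ⊢
  tauto

lemma pr_symmDiff_inter_le (A B A' B' : Set Ω) :
    (μ ((A ∩ B) ∆ (A' ∩ B'))).toReal ≤ (μ (A ∆ A')).toReal + (μ (B ∆ B')).toReal :=
  le_trans (pr_mono (symmDiff_inter_subset A B A' B')) (pr_union_le _ _)

end prhelpers

end Approx

namespace PhiAux

variable {Ω : Type*} {mA mB : MeasurableSpace Ω} [mΩ : MeasurableSpace Ω]
  {μ : Measure Ω} [IsProbabilityMeasure μ]

omit [IsProbabilityMeasure μ] in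
lemma pr_nonneg (s : Set Ω) : 0 ≤ (μ s).toReal := ENNReal.toReal_nonneg

lemma pr_le_one (s : Set Ω) : (μ s).toReal ≤ 1 := by
  have := prob_le_one (μ := μ) (s := s)
  simpa using ENNReal.toReal_mono (by simp) this

lemma ratio_mem (A B : Set Ω) : (μ (A ∩ B)).toReal / (μ B).toReal ∈ Set.Icc (0:ℝ) 1 := by
  constructor
  · positivity
  · rcases eq_or_ne (μ B) 0 with h | h
    · have : μ (A ∩ B) = 0 := measure_mono_null Set.inter_subset_right h
      simp [this, h]
    · rw [div_le_one (ENNReal.toReal_pos h (measure_ne_top _ _))]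
      exact ENNReal.toReal_mono (measure_ne_top _ _) (measure_mono Set.inter_subset_right)

lemma mem_phiCoefSet_le_one {r : ℝ}
    (hr : r ∈ {r : ℝ | ∃ A B : Set Ω, MeasurableSet[mA] A ∧ MeasurableSet[mB] B ∧ μ B ≠ 0 ∧
      r = |(μ A).toReal - (μ (A ∩ B)).toReal / (μ B).toReal|}) : r ≤ 1 := by
  obtain ⟨A, B, -, -, -, rfl⟩ := hr
  have h1 := pr_le_one (μ := μ) A
  have h2 := pr_nonneg (μ := μ) A
  have h3 := ratio_mem (μ := μ) A B
  rw [abs_sub_le_iff]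
  constructor <;> [linarith [h3.1]; linarith [h3.2]]

lemma phiCoefSet_bddAbove :
    BddAbove {r : ℝ | ∃ A B : Set Ω, MeasurableSet[mA] A ∧ MeasurableSet[mB] B ∧ μ B ≠ 0 ∧
      r = |(μ A).toReal - (μ (A ∩ B)).toReal / (μ B).toReal|} :=
  ⟨1, fun _ hr => mem_phiCoefSet_le_one hr⟩

lemma zero_mem_phiCoefSet :
    (0:ℝ) ∈ {r : ℝ | ∃ A B : Set Ω, MeasurableSet[mA] A ∧ MeasurableSet[mB] B ∧ μ B ≠ 0 ∧
      r = |(μ A).toReal - (μ (A ∩ B)).toReal / (μ B).toReal|} :=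
  ⟨∅, Set.univ, @MeasurableSet.empty _ mA, @MeasurableSet.univ _ mB, by simp, by simp⟩

lemma abs_le_phiCoef {A B : Set Ω}
    (hA : MeasurableSet[mA] A) (hB : MeasurableSet[mB] B) (hμB : μ B ≠ 0) :
    |(μ A).toReal - (μ (A ∩ B)).toReal / (μ B).toReal| ≤ phiCoef μ mA mB :=
  le_csSup phiCoefSet_bddAbove ⟨A, B, hA, hB, hμB, rfl⟩

lemma phiCoef_nonneg : 0 ≤ phiCoef μ mA mB :=
  le_csSup phiCoefSet_bddAbove zero_mem_phiCoefSet

lemma phiCoef_le_one : phiCoef μ mA mB ≤ 1 :=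
  csSup_le ⟨0, zero_mem_phiCoefSet⟩ fun _ hr => mem_phiCoefSet_le_one hr

lemma phiMixSet_bddAbove (mseq : ℕ → MeasurableSpace Ω) (k : ℕ) :
    BddAbove {r : ℝ | ∃ j s : ℕ, (k : ℤ) ≤ |(j : ℤ) - s| ∧ r = phiCoef μ (mseq j) (mseq s)} := by
  refine ⟨1, fun r hr => ?_⟩
  obtain ⟨j, s, -, rfl⟩ := hr
  exact phiCoef_le_one

omit [IsProbabilityMeasure μ] in
lemma phiMixSet_nonempty (mseq : ℕ → MeasurableSpace Ω) (k : ℕ) :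
    Set.Nonempty {r : ℝ | ∃ j s : ℕ, (k : ℤ) ≤ |(j : ℤ) - s| ∧ r = phiCoef μ (mseq j) (mseq s)} :=
  ⟨phiCoef μ (mseq k) (mseq 0), k, 0, by simpa using le_abs_self (k:ℤ), rfl⟩

lemma phiCoef_le_phiMix {mseq : ℕ → MeasurableSpace Ω} {k j s : ℕ}
    (h : (k : ℤ) ≤ |(j : ℤ) - s|) : phiCoef μ (mseq j) (mseq s) ≤ phiMix μ mseq k :=
  le_csSup (phiMixSet_bddAbove mseq k) ⟨j, s, h, rfl⟩

lemma phiMix_nonneg (mseq : ℕ → MeasurableSpace Ω) (k : ℕ) : 0 ≤ phiMix μ mseq k :=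
  le_trans (phiCoef_nonneg (mA := mseq k) (mB := mseq 0)) (phiCoef_le_phiMix (j := k) (s := 0) (by simpa using le_abs_self (k:ℤ)))

lemma phiMix_le_one (mseq : ℕ → MeasurableSpace Ω) (k : ℕ) : phiMix μ mseq k ≤ 1 :=
  csSup_le (phiMixSet_nonempty mseq k) fun r hr => by
    obtain ⟨j, s, -, rfl⟩ := hr; exact phiCoef_le_one

end PhiAux

namespace PhiAux

section Core

variable {Ω : Type*} {mA1 mB1 mA2 mB2 MX MY : MeasurableSpace Ω}
  [mΩ : MeasurableSpace Ω] {μ : Measure Ω} [IsProbabilityMeasure μ]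

lemma pr_biUnion {ι : Type*} (T : Finset ι) (f : ι → Set Ω)
    (hdisj : Pairwise fun i i' => Disjoint (f i) (f i')) (hmeas : ∀ i, MeasurableSet (f i)) :
    (μ (⋃ i ∈ T, f i)).toReal = ∑ i ∈ T, (μ (f i)).toReal := by
  rw [measure_biUnion_finset (fun i _ j _ hij => hdisj hij) (fun i _ => hmeas i),
    ENNReal.toReal_sum (fun i _ => measure_ne_top _ _)]

lemma cell_disjoint {ι κ : Type*} {E : ι → Set Ω} {F : κ → Set Ω}
    (hdE : Pairwise fun i i' => Disjoint (E i) (E i'))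
    (hdF : Pairwise fun j j' => Disjoint (F j) (F j')) :
    Pairwise fun x y : ι × κ => Disjoint (E x.1 ∩ F x.2) (E y.1 ∩ F y.2) := by
  intro x y hxy
  rcases eq_or_ne x.1 y.1 with h1 | h1
  · have h2 : x.2 ≠ y.2 := fun h2 => hxy (Prod.ext h1 h2)
    exact Disjoint.mono Set.inter_subset_right Set.inter_subset_right (hdF h2)
  · exact Disjoint.mono Set.inter_subset_left Set.inter_subset_left (hdE h1)

lemma rect_bound
    (hA1 : mA1 ≤ MX) (hA2 : mA2 ≤ MX) (hB1 : mB1 ≤ MY) (hB2 : mB2 ≤ MY)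
    (hMX : MX ≤ mΩ) (hMY : MY ≤ mΩ) (hindep : Indep MX MY μ)
    {a b : ℝ} (ha1 : a ≤ 1) (hb1 : b ≤ 1)
    (hA : ∀ E G : Set Ω, MeasurableSet[mA1] E → MeasurableSet[mA2] G → μ G ≠ 0 →
      |(μ E).toReal - (μ (E ∩ G)).toReal / (μ G).toReal| ≤ a)
    (hB : ∀ F H : Set Ω, MeasurableSet[mB1] F → MeasurableSet[mB2] H → μ H ≠ 0 →
      |(μ F).toReal - (μ (F ∩ H)).toReal / (μ H).toReal| ≤ b)
    {A : Set Ω} (hgA : GridRep mA1 mB1 A)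
    {G H : Set Ω} (hG : MeasurableSet[mA2] G) (hH : MeasurableSet[mB2] H) :
    |(μ (A ∩ (G ∩ H))).toReal - (μ A).toReal * (μ (G ∩ H)).toReal|
      ≤ (a + b - a * b) * (μ (G ∩ H)).toReal := by
  classical
  have ha0 : 0 ≤ a := by
    have := hA ∅ Set.univ (@MeasurableSet.empty _ mA1) (@MeasurableSet.univ _ mA2) (by simp)
    simpa using this
  have hb0 : 0 ≤ b := by
    have := hB ∅ Set.univ (@MeasurableSet.empty _ mB1) (@MeasurableSet.univ _ mB2) (by simp)
    simpa using this
  have hc0 : 0 ≤ a + b - a * b := by nlinarith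
  rcases eq_or_ne (μ (G ∩ H)) 0 with h0 | h0
  · have hA0 : μ (A ∩ (G ∩ H)) = 0 := measure_mono_null Set.inter_subset_right h0
    rw [hA0, h0]
    simp
  · have hG0 : μ G ≠ 0 := fun h => h0 (measure_mono_null Set.inter_subset_left h)
    have hH0 : μ H ≠ 0 := fun h => h0 (measure_mono_null Set.inter_subset_right h)
    obtain ⟨ι, κ, hι, hκ, E, F, S, hE, hF, hdE, hdF, hcE, hcF, hrep⟩ := hgA.ok
    letI := hι; letI := hκ
    have hmul := (Indep_iff MX MY μ).1 hindep
    have hEm : ∀ i, MeasurableSet (E i) := fun i => hMX _ (hA1 _ (hE i))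
    have hFm : ∀ j, MeasurableSet (F j) := fun j => hMY _ (hB1 _ (hF j))
    have hGm : MeasurableSet G := hMX _ (hA2 _ hG)
    have hHm : MeasurableSet H := hMY _ (hB2 _ hH)
    set prG : ℝ := (μ G).toReal with hprGdef
    set prH : ℝ := (μ H).toReal with hprHdef
    have hprG : 0 < prG := ENNReal.toReal_pos hG0 (measure_ne_top _ _)
    have hprH : 0 < prH := ENNReal.toReal_pos hH0 (measure_ne_top _ _)
    set p : ι → ℝ := fun i => (μ (E i)).toReal with hpdef
    set q : κ → ℝ := fun j => (μ (F j)).toReal with hqdef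
    set p' : ι → ℝ := fun i => (μ (E i ∩ G)).toReal / prG with hp'def
    set q' : κ → ℝ := fun j => (μ (F j ∩ H)).toReal / prH with hq'def
    -- sums over arbitrary finsets
    have hpsumT : ∀ T : Finset ι, ∑ i ∈ T, p i = (μ (⋃ i ∈ T, E i)).toReal :=
      fun T => (pr_biUnion T E hdE hEm).symm
    have hqsumT : ∀ T : Finset κ, ∑ j ∈ T, q j = (μ (⋃ j ∈ T, F j)).toReal :=
      fun T => (pr_biUnion T F hdF hFm).symm
    have hp'sumT : ∀ T : Finset ι,
        ∑ i ∈ T, p' i = (μ ((⋃ i ∈ T, E i) ∩ G)).toReal / prG := by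
      intro T
      have hset : ⋃ i ∈ T, (E i ∩ G) = (⋃ i ∈ T, E i) ∩ G := by
        ext ω; simp only [Set.mem_iUnion, Set.mem_inter_iff]; tauto
      rw [hp'def, ← Finset.sum_div, ← hset,
        pr_biUnion T (fun i => E i ∩ G)
          (fun i i' h => Disjoint.mono Set.inter_subset_left Set.inter_subset_left (hdE h))
          (fun i => (hEm i).inter hGm)]
    have hq'sumT : ∀ T : Finset κ,
        ∑ j ∈ T, q' j = (μ ((⋃ j ∈ T, F j) ∩ H)).toReal / prH := by
      intro T
      have hset : ⋃ j ∈ T, (F j ∩ H) = (⋃ j ∈ T, F j) ∩ H := by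
        ext ω; simp only [Set.mem_iUnion, Set.mem_inter_iff]; tauto
      rw [hq'def, ← Finset.sum_div, ← hset,
        pr_biUnion T (fun j => F j ∩ H)
          (fun j j' h => Disjoint.mono Set.inter_subset_left Set.inter_subset_left (hdF h))
          (fun j => (hFm j).inter hHm)]
    have huE : ⋃ i ∈ (Finset.univ : Finset ι), E i = Set.univ := by
      rw [← hcE]; simp
    have huF : ⋃ j ∈ (Finset.univ : Finset κ), F j = Set.univ := by
      rw [← hcF]; simp
    have hps : ∑ i, p i = 1 := by rw [hpsumT Finset.univ, huE]; simp
    have hqs : ∑ j, q j = 1 := by rw [hqsumT Finset.univ, huF]; simp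
    have hp's : ∑ i, p' i = 1 := by
      rw [hp'sumT Finset.univ, huE, Set.univ_inter]
      exact div_self hprG.ne'
    have hq's : ∑ j, q' j = 1 := by
      rw [hq'sumT Finset.univ, huF, Set.univ_inter]
      exact div_self hprH.ne'
    have hAsum : ∀ T : Finset ι, |∑ i ∈ T, (p i - p' i)| ≤ a := by
      intro T
      rw [Finset.sum_sub_distrib, hpsumT T, hp'sumT T]
      exact hA _ G (@Finset.measurableSet_biUnion Ω ι mA1 E T (fun i _ => hE i)) hG hG0
    have hBsum : ∀ T : Finset κ, |∑ j ∈ T, (q j - q' j)| ≤ b := by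
      intro T
      rw [Finset.sum_sub_distrib, hqsumT T, hq'sumT T]
      exact hB _ H (@Finset.measurableSet_biUnion Ω κ mB1 F T (fun j _ => hF j)) hH hH0
    have htv := tv_prod p p' q q'
      (fun i => ENNReal.toReal_nonneg) (fun i => by positivity)
      (fun j => ENNReal.toReal_nonneg) (fun j => by positivity)
      hps hp's hqs hq's ha1 hb1 hAsum hBsum S
    -- measure computations
    have hGH : (μ (G ∩ H)).toReal = prG * prH := by
      rw [hmul G H (hA2 _ hG) (hB2 _ hH), ENNReal.toReal_mul]
    have hcell : ∀ x : ι × κ, (μ (E x.1 ∩ F x.2)).toReal = p x.1 * q x.2 := by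
      intro x
      rw [hmul (E x.1) (F x.2) (hA1 _ (hE x.1)) (hB1 _ (hF x.2)), ENNReal.toReal_mul]
    have hcell' : ∀ x : ι × κ,
        (μ ((E x.1 ∩ F x.2) ∩ (G ∩ H))).toReal = (p' x.1 * q' x.2) * (prG * prH) := by
      intro x
      have hsete : (E x.1 ∩ F x.2) ∩ (G ∩ H) = (E x.1 ∩ G) ∩ (F x.2 ∩ H) := by
        ext ω; simp only [Set.mem_inter_iff]; tauto
      rw [hsete, hmul _ _ ((hA1 _ (hE x.1)).inter (hA2 _ hG))
        ((hB1 _ (hF x.2)).inter (hB2 _ hH)), ENNReal.toReal_mul, hp'def, hq'def]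
      field_simp
    have hμA : (μ A).toReal = ∑ x ∈ S, p x.1 * q x.2 := by
      rw [hrep, pr_biUnion S (fun x => E x.1 ∩ F x.2) (cell_disjoint hdE hdF)
        (fun x => (hEm x.1).inter (hFm x.2))]
      exact Finset.sum_congr rfl fun x _ => hcell x
    have hμAB : (μ (A ∩ (G ∩ H))).toReal = ∑ x ∈ S, (p' x.1 * q' x.2) * (prG * prH) := by
      have hset : A ∩ (G ∩ H) = ⋃ x ∈ S, ((E x.1 ∩ F x.2) ∩ (G ∩ H)) := by
        rw [hrep]; ext ω; simp only [Set.mem_iUnion, Set.mem_inter_iff]; tauto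
      rw [hset, pr_biUnion S (fun x => (E x.1 ∩ F x.2) ∩ (G ∩ H))
        (fun x y h => Disjoint.mono Set.inter_subset_left Set.inter_subset_left
          (cell_disjoint hdE hdF h))
        (fun x => ((hEm x.1).inter (hFm x.2)).inter (hGm.inter hHm))]
      exact Finset.sum_congr rfl fun x _ => hcell' x
    have hμAB' : (μ (A ∩ (G ∩ H))).toReal = (∑ x ∈ S, p' x.1 * q' x.2) * (prG * prH) := by
      rw [hμAB, ← Finset.sum_mul]
    have htv' : |(∑ x ∈ S, p x.1 * q x.2) - ∑ x ∈ S, p' x.1 * q' x.2| ≤ a + b - a * b := by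
      rw [← Finset.sum_sub_distrib]; exact htv
    rw [hμA, hμAB', hGH, ← sub_mul, abs_mul,
      abs_of_nonneg (by positivity : (0:ℝ) ≤ prG * prH), abs_sub_comm]
    exact mul_le_mul_of_nonneg_right htv' (by positivity)

lemma _root_.GridRep.measurableSet {mA mB : MeasurableSpace Ω} {t : Set Ω} (h : GridRep mA mB t) :
    MeasurableSet[mA ⊔ mB] t := by
  obtain ⟨ι, κ, hι, hκ, E, F, S, hE, hF, -, -, -, -, rfl⟩ := h.ok
  letI := hι; letI := hκ
  exact @Finset.measurableSet_biUnion Ω (ι × κ) (mA ⊔ mB) (fun x => E x.1 ∩ F x.2) S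
    (fun x _ => MeasurableSet.inter ((le_sup_left : mA ≤ mA ⊔ mB) _ (hE x.1))
      ((le_sup_right : mB ≤ mA ⊔ mB) _ (hF x.2)))

lemma algebra_bound
    (hA1 : mA1 ≤ MX) (hA2 : mA2 ≤ MX) (hB1 : mB1 ≤ MY) (hB2 : mB2 ≤ MY)
    (hMX : MX ≤ mΩ) (hMY : MY ≤ mΩ) (hindep : Indep MX MY μ)
    {a b : ℝ} (ha1 : a ≤ 1) (hb1 : b ≤ 1)
    (hA : ∀ E G : Set Ω, MeasurableSet[mA1] E → MeasurableSet[mA2] G → μ G ≠ 0 →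
      |(μ E).toReal - (μ (E ∩ G)).toReal / (μ G).toReal| ≤ a)
    (hB : ∀ F H : Set Ω, MeasurableSet[mB1] F → MeasurableSet[mB2] H → μ H ≠ 0 →
      |(μ F).toReal - (μ (F ∩ H)).toReal / (μ H).toReal| ≤ b)
    {A B : Set Ω} (hgA : GridRep mA1 mB1 A) (hgB : GridRep mA2 mB2 B) :
    |(μ (A ∩ B)).toReal - (μ A).toReal * (μ B).toReal| ≤ (a + b - a * b) * (μ B).toReal := by
  classical
  have hAm : MeasurableSet A := (sup_le (hA1.trans hMX) (hB1.trans hMY)) _ hgA.measurableSet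
  obtain ⟨ι, κ, hι, hκ, G, H, T, hG, hH, hdG, hdH, hcG, hcH, hrep⟩ := hgB.ok
  letI := hι; letI := hκ
  have hGm : ∀ l, MeasurableSet (G l) := fun l => hMX _ (hA2 _ (hG l))
  have hHm : ∀ m, MeasurableSet (H m) := fun m => hMY _ (hB2 _ (hH m))
  have hcelld := cell_disjoint hdG hdH
  have hprB : (μ B).toReal = ∑ y ∈ T, (μ (G y.1 ∩ H y.2)).toReal := by
    rw [hrep, pr_biUnion T _ hcelld (fun y => (hGm y.1).inter (hHm y.2))]
  have hprAB : (μ (A ∩ B)).toReal = ∑ y ∈ T, (μ (A ∩ (G y.1 ∩ H y.2))).toReal := by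
    have hset : A ∩ B = ⋃ y ∈ T, (A ∩ (G y.1 ∩ H y.2)) := by
      rw [hrep]; ext ω; simp only [Set.mem_iUnion, Set.mem_inter_iff]; tauto
    rw [hset, pr_biUnion T _
      (fun x y h => Disjoint.mono Set.inter_subset_right Set.inter_subset_right (hcelld h))
      (fun y => hAm.inter ((hGm y.1).inter (hHm y.2)))]
  rw [hprAB, hprB, Finset.mul_sum, Finset.mul_sum, ← Finset.sum_sub_distrib]
  refine le_trans (Finset.abs_sum_le_sum_abs _ _) (Finset.sum_le_sum fun y _ => ?_)
  exact rect_bound hA1 hA2 hB1 hB2 hMX hMY hindep ha1 hb1 hA hB hgA (hG y.1) (hH y.2)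

lemma phiCoef_join_le
    (hA1 : mA1 ≤ MX) (hA2 : mA2 ≤ MX) (hB1 : mB1 ≤ MY) (hB2 : mB2 ≤ MY)
    (hMX : MX ≤ mΩ) (hMY : MY ≤ mΩ) (hindep : Indep MX MY μ)
    {a b : ℝ} (ha1 : a ≤ 1) (hb1 : b ≤ 1)
    (hA : ∀ E G : Set Ω, MeasurableSet[mA1] E → MeasurableSet[mA2] G → μ G ≠ 0 →
      |(μ E).toReal - (μ (E ∩ G)).toReal / (μ G).toReal| ≤ a)
    (hB : ∀ F H : Set Ω, MeasurableSet[mB1] F → MeasurableSet[mB2] H → μ H ≠ 0 →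
      |(μ F).toReal - (μ (F ∩ H)).toReal / (μ H).toReal| ≤ b) :
    phiCoef μ (mA1 ⊔ mB1) (mA2 ⊔ mB2) ≤ a + b - a * b := by
  classical
  have ha0 : 0 ≤ a := by
    have := hA ∅ Set.univ (@MeasurableSet.empty _ mA1) (@MeasurableSet.univ _ mA2) (by simp)
    simpa using this
  have hb0 : 0 ≤ b := by
    have := hB ∅ Set.univ (@MeasurableSet.empty _ mB1) (@MeasurableSet.univ _ mB2) (by simp)
    simpa using this
  have hc0 : 0 ≤ a + b - a * b := by nlinarith
  have hc1 : a + b - a * b ≤ 1 := by nlinarith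
  have hle1 : mA1 ⊔ mB1 ≤ mΩ := sup_le (hA1.trans hMX) (hB1.trans hMY)
  have hle2 : mA2 ⊔ mB2 ≤ mΩ := sup_le (hA2.trans hMX) (hB2.trans hMY)
  refine csSup_le ⟨0, zero_mem_phiCoefSet⟩ ?_
  rintro r ⟨A, B, hAmeas, hBmeas, hμB, rfl⟩
  have hprB : 0 < (μ B).toReal := ENNReal.toReal_pos hμB (measure_ne_top _ _)
  have key : |(μ (A ∩ B)).toReal - (μ A).toReal * (μ B).toReal|
      ≤ (a + b - a * b) * (μ B).toReal := by
    refine le_of_forall_pos_le_add ?_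
    intro ε hε
    have hδ : 0 < ε / 5 := by linarith
    obtain ⟨A', hA'alg, hA'meas, hA'd⟩ := approx_join μ hle1 hAmeas hδ
    obtain ⟨B', hB'alg, hB'meas, hB'd⟩ := approx_join μ hle2 hBmeas hδ
    have halg := algebra_bound hA1 hA2 hB1 hB2 hMX hMY hindep ha1 hb1 hA hB
      (exists_grid hA'alg) (exists_grid hB'alg)
    have e1 : |(μ (A ∩ B)).toReal - (μ (A' ∩ B')).toReal| ≤ ε / 5 + ε / 5 :=
      le_trans (abs_pr_sub_le _ _)
        (le_trans (pr_symmDiff_inter_le A B A' B') (by linarith))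
    have e2 : |(μ A).toReal - (μ A').toReal| ≤ ε / 5 := le_trans (abs_pr_sub_le _ _) hA'd
    have e3 : |(μ B).toReal - (μ B').toReal| ≤ ε / 5 := le_trans (abs_pr_sub_le _ _) hB'd
    have pA' := pr_le_one (μ := μ) A'
    have pB := pr_le_one (μ := μ) B
    have pA'0 := pr_nonneg (μ := μ) A'
    have pB0 := pr_nonneg (μ := μ) B
    have e4 : |(μ A).toReal * (μ B).toReal - (μ A').toReal * (μ B').toReal|
        ≤ ε / 5 + ε / 5 := by
      have hid : (μ A).toReal * (μ B).toReal - (μ A').toReal * (μ B').toReal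
          = ((μ A).toReal - (μ A').toReal) * (μ B).toReal
            + (μ A').toReal * ((μ B).toReal - (μ B').toReal) := by ring
      rw [hid]
      refine le_trans (abs_add_le _ _) ?_
      rw [abs_mul, abs_mul]
      have b1 : |(μ A).toReal - (μ A').toReal| * |(μ B).toReal| ≤ (ε/5) * 1 := by
        apply mul_le_mul e2 (by rw [abs_of_nonneg pB0]; exact pB) (abs_nonneg _) hδ.le
      have b2 : |(μ A').toReal| * |(μ B).toReal - (μ B').toReal| ≤ 1 * (ε/5) := by
        apply mul_le_mul (by rw [abs_of_nonneg pA'0]; exact pA') e3 (abs_nonneg _) (by norm_num)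
      linarith
    have e5 : (μ B').toReal ≤ (μ B).toReal + ε / 5 := by
      have := (abs_le.1 e3).1; linarith
    have tri : |(μ (A ∩ B)).toReal - (μ A).toReal * (μ B).toReal|
        ≤ |(μ (A ∩ B)).toReal - (μ (A' ∩ B')).toReal|
          + |(μ (A' ∩ B')).toReal - (μ A').toReal * (μ B').toReal|
          + |(μ A').toReal * (μ B').toReal - (μ A).toReal * (μ B).toReal| := by
      have t1 := abs_sub_le ((μ (A ∩ B)).toReal) ((μ (A' ∩ B')).toReal)
        ((μ A).toReal * (μ B).toReal)
      have t2 := abs_sub_le ((μ (A' ∩ B')).toReal) ((μ A').toReal * (μ B').toReal)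
        ((μ A).toReal * (μ B).toReal)
      linarith
    have e4' : |(μ A').toReal * (μ B').toReal - (μ A).toReal * (μ B).toReal| ≤ ε/5 + ε/5 := by
      rw [abs_sub_comm]; exact e4
    have hmid : |(μ (A' ∩ B')).toReal - (μ A').toReal * (μ B').toReal|
        ≤ (a + b - a * b) * ((μ B).toReal + ε/5) :=
      le_trans halg (mul_le_mul_of_nonneg_left e5 hc0)
    have : (a + b - a * b) * ((μ B).toReal + ε/5)
        ≤ (a + b - a * b) * (μ B).toReal + ε/5 := by
      have : (a + b - a * b) * (ε/5) ≤ 1 * (ε/5) := mul_le_mul_of_nonneg_right hc1 hδ.le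
      nlinarith
    linarith
  have hrw : (μ A).toReal - (μ (A ∩ B)).toReal / (μ B).toReal
      = ((μ A).toReal * (μ B).toReal - (μ (A ∩ B)).toReal) / (μ B).toReal := by
    field_simp
  rw [hrw, abs_div, abs_of_pos hprB, div_le_iff₀ hprB]
  calc |(μ A).toReal * (μ B).toReal - (μ (A ∩ B)).toReal|
      = |(μ (A ∩ B)).toReal - (μ A).toReal * (μ B).toReal| := abs_sub_comm _ _
    _ ≤ (a + b - a * b) * (μ B).toReal := key

end Core

end PhiAux

lemma sqrt_add_le' (x y : ℝ) (hx : 0 ≤ x) (hy : 0 ≤ y) :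
    Real.sqrt (x + y) ≤ Real.sqrt x + Real.sqrt y := by
  rw [show x + y = Real.sqrt x ^ 2 + Real.sqrt y ^ 2 by rw [Real.sq_sqrt hx, Real.sq_sqrt hy]]
  calc Real.sqrt (Real.sqrt x ^ 2 + Real.sqrt y ^ 2)
      ≤ Real.sqrt ((Real.sqrt x + Real.sqrt y) ^ 2) := by
        apply Real.sqrt_le_sqrt; nlinarith [Real.sqrt_nonneg x, Real.sqrt_nonneg y]
    _ = Real.sqrt x + Real.sqrt y := Real.sqrt_sq (by positivity)

open PhiAux in
/-- for two independent `φ`-mixing sequences of σ-fields `(𝒳_j)` and `(𝒴_j)`,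
the jointly generated sequence `𝒵_j = 𝒳_j ⊔ 𝒴_j` satisfies
`φ_𝒵(k) ≤ φ_𝒳(k) + φ_𝒴(k) − φ_𝒳(k)φ_𝒴(k)` and hence
`∑ₖ √φ_𝒵(k) ≤ ∑ₖ √φ_𝒳(k) + ∑ₖ √φ_𝒴(k)`. -/
theorem phiMix_join {Ω : Type*} [mΩ : MeasurableSpace Ω] (μ : Measure Ω)
    [IsProbabilityMeasure μ]
    (mX mY : ℕ → MeasurableSpace Ω)
    (hXsub : ∀ j, mX j ≤ mΩ) (hYsub : ∀ j, mY j ≤ mΩ)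
    (hindep : Indep (⨆ j, mX j) (⨆ j, mY j) μ)
    (hsumX : Summable fun k => Real.sqrt (phiMix μ mX k))
    (hsumY : Summable fun k => Real.sqrt (phiMix μ mY k)) :
    (∀ k, phiMix μ (fun j => mX j ⊔ mY j) k ≤
        phiMix μ mX k + phiMix μ mY k - phiMix μ mX k * phiMix μ mY k) ∧
      ∑' k, Real.sqrt (phiMix μ (fun j => mX j ⊔ mY j) k) ≤
        (∑' k, Real.sqrt (phiMix μ mX k)) + ∑' k, Real.sqrt (phiMix μ mY k) := by
  have part1 : ∀ k, phiMix μ (fun j => mX j ⊔ mY j) k ≤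
      phiMix μ mX k + phiMix μ mY k - phiMix μ mX k * phiMix μ mY k := by
    intro k
    refine csSup_le (phiMixSet_nonempty _ k) ?_
    rintro r ⟨j, s, hjs, rfl⟩
    exact phiCoef_join_le (le_iSup mX j) (le_iSup mX s) (le_iSup mY j) (le_iSup mY s)
      (iSup_le hXsub) (iSup_le hYsub) hindep (phiMix_le_one mX k) (phiMix_le_one mY k)
      (fun E G hE hG hμG => le_trans (abs_le_phiCoef hE hG hμG) (phiCoef_le_phiMix hjs))
      (fun F H hF hH hμH => le_trans (abs_le_phiCoef hF hH hμH) (phiCoef_le_phiMix hjs))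
  refine ⟨part1, ?_⟩
  have hsqrt : ∀ k, Real.sqrt (phiMix μ (fun j => mX j ⊔ mY j) k)
      ≤ Real.sqrt (phiMix μ mX k) + Real.sqrt (phiMix μ mY k) := by
    intro k
    have hXY : phiMix μ (fun j => mX j ⊔ mY j) k ≤ phiMix μ mX k + phiMix μ mY k := by
      refine le_trans (part1 k) ?_
      nlinarith [phiMix_nonneg (μ := μ) mX k, phiMix_nonneg (μ := μ) mY k]
    exact le_trans (Real.sqrt_le_sqrt hXY)
      (sqrt_add_le' _ _ (phiMix_nonneg mX k) (phiMix_nonneg mY k))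
  have hsumZ : Summable (fun k => Real.sqrt (phiMix μ (fun j => mX j ⊔ mY j) k)) :=
    Summable.of_nonneg_of_le (fun k => Real.sqrt_nonneg _) hsqrt (hsumX.add hsumY)
  calc ∑' k, Real.sqrt (phiMix μ (fun j => mX j ⊔ mY j) k)
      ≤ ∑' k, (Real.sqrt (phiMix μ mX k) + Real.sqrt (phiMix μ mY k)) :=
        Summable.tsum_le_tsum hsqrt hsumZ (hsumX.add hsumY)
    _ = (∑' k, Real.sqrt (phiMix μ mX k)) + ∑' k, Real.sqrt (phiMix μ mY k) :=
        Summable.tsum_add hsumX hsumY
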